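/- arXiv:2102.13411 — 6 statements merged into one kernel-verified Lean document; each statement's English description precedes it below -/
import Mathlib

section
/- For every positive integer q, every l_θ > 0, every l_s > l_θ and every 0 < ε_s ≤ 1, there exist a constant l_γ > 0 and a class K function γ_s such that γ_s(s) ≤ l_γ and γ_s(s) ≤ s for all s ≥ 0, and such that |satv(θ + θ̃) − θ| ≤ γ_s(|θ̃|) for all θ̃ ∈ ℝ^q and all θ ∈ ℝ^q with |θ| ≤ l_θ (Euclidean norm). -/
open Real Set Filter
open scoped RealInnerProductSpace

noncomputable section

/-- A continuous function `ρ : [0,∞) → [0,∞)` is of class K if it is strictly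
increasing with `ρ 0 = 0`. -/
def IsClassK (ρ : ℝ → ℝ) : Prop :=
  ContinuousOn ρ (Set.Ici 0) ∧ StrictMonoOn ρ (Set.Ici 0) ∧ ρ 0 = 0

/-- Class K-infinity: class K and unbounded. -/
def IsClassKInfty (ρ : ℝ → ℝ) : Prop :=
  IsClassK ρ ∧ Filter.Tendsto ρ Filter.atTop Filter.atTop

/-- Class KL functions. -/
def IsClassKL (β : ℝ → ℝ → ℝ) : Prop :=
  (∀ t ∈ Set.Ici (0:ℝ), IsClassK fun s => β s t) ∧
  ∀ s ∈ Set.Ici (0:ℝ), AntitoneOn (β s) (Set.Ici 0) ∧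
      Filter.Tendsto (β s) Filter.atTop (nhds 0)

/-- The smooth saturation function with level `ls` and margin `εs`. -/
noncomputable def sat (ls εs s : ℝ) : ℝ :=
  if |s| ≤ ls then s
  else if |s| ≤ ls + εs then s - Real.sign s * (|s| - ls) ^ 2 / (2 * εs)
  else (ls + εs / 2) * Real.sign s

/-- Componentwise saturation on `ℝ^q`. -/
noncomputable def satv {q : ℕ} (ls εs : ℝ) (θ : EuclideanSpace ℝ (Fin q)) :
    EuclideanSpace ℝ (Fin q) := WithLp.toLp 2 (fun i => sat ls εs (θ i))

/-- The dead-zone function with level `lθ`. -/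
noncomputable def dz (lθ s : ℝ) : ℝ :=
  if |s| ≤ lθ then 0
  else if |s| < lθ + 1 then
    (|s| - lθ) ^ 2 * (2 * (lθ + 1) ^ 2 - (2 * lθ + 1) * |s|) * Real.sign s
  else s

/-- Componentwise dead-zone on `ℝ^q`. -/
noncomputable def dzv {q : ℕ} (lθ : ℝ) (θ : EuclideanSpace ℝ (Fin q)) :
    EuclideanSpace ℝ (Fin q) := WithLp.toLp 2 (fun i => dz lθ (θ i))

lemma sat_neg (ls εs s : ℝ) : sat ls εs (-s) = - sat ls εs s := by
  unfold sat
  rw [abs_neg, Real.sign_neg]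
  split_ifs <;> ring

lemma sat_eq_self (ls εs : ℝ) {s : ℝ} (h : |s| ≤ ls) : sat ls εs s = s := by
  unfold sat; rw [if_pos h]

lemma sat_bounds {ls εs : ℝ} (hls : 0 < ls) (hεs : 0 < εs) {s : ℝ} (h : ls < s) :
    ls ≤ sat ls εs s ∧ sat ls εs s ≤ s := by
  have hs : 0 < s := hls.trans h
  have habs : |s| = s := abs_of_pos hs
  have hsg : Real.sign s = 1 := Real.sign_of_pos hs
  unfold sat
  rw [habs, hsg]
  split_ifs with h1 h2
  · constructor <;> linarith
  · have key : (s - ls) ^ 2 / (2 * εs) ≤ s - ls := by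
      rw [div_le_iff₀ (by positivity)]
      nlinarith
    have key2 : 0 ≤ (s - ls) ^ 2 / (2 * εs) := by positivity
    simp only [one_mul]
    constructor <;> linarith
  · push_neg at h2
    constructor <;> nlinarith

lemma sat_abs_le_aux {ls εs : ℝ} (hls : 0 < ls) (hεs : 0 < εs) {s : ℝ} (hs : 0 ≤ s) :
    |sat ls εs s| ≤ ls + εs / 2 := by
  rcases le_or_gt s ls with h | h
  · rw [sat_eq_self ls εs (by rwa [abs_of_nonneg hs])]
    rw [abs_of_nonneg hs]; linarith
  · obtain ⟨hb1, hb2⟩ := sat_bounds hls hεs h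
    rw [abs_of_nonneg (by linarith)]
    have habs : |s| = s := abs_of_nonneg hs
    have hsg : Real.sign s = 1 := Real.sign_of_pos (by linarith)
    unfold sat
    rw [habs, hsg]
    split_ifs with h1 h2
    · linarith
    · have key : ls + εs / 2 - (s - 1 * (s - ls) ^ 2 / (2 * εs)) =
        (εs - (s - ls)) ^ 2 / (2 * εs) := by field_simp; ring
      nlinarith [sq_nonneg (εs - (s - ls)), div_nonneg (sq_nonneg (εs - (s-ls))) (le_of_lt (by positivity : (0:ℝ) < 2*εs))]
    · linarith

lemma sat_abs_le {ls εs : ℝ} (hls : 0 < ls) (hεs : 0 < εs) (s : ℝ) :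
    |sat ls εs s| ≤ ls + εs / 2 := by
  rcases le_total 0 s with h | h
  · exact sat_abs_le_aux hls hεs h
  · have : |sat ls εs s| = |sat ls εs (-s)| := by rw [sat_neg, abs_neg]
    rw [this]
    exact sat_abs_le_aux hls hεs (by linarith)

lemma sat_contraction_aux {ls εs : ℝ} (hls : 0 < ls) (hεs : 0 < εs) {s b : ℝ}
    (hs : 0 ≤ s) (hb : |b| ≤ ls) : |sat ls εs s - b| ≤ |s - b| := by
  rcases le_or_gt s ls with h | h
  · rw [sat_eq_self ls εs (by rwa [abs_of_nonneg hs])]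
  · obtain ⟨hb1, hb2⟩ := sat_bounds hls hεs h
    have hble : b ≤ ls := (le_abs_self b).trans hb
    rw [abs_of_nonneg (by linarith), abs_of_nonneg (by linarith)]
    linarith

lemma sat_contraction {ls εs : ℝ} (hls : 0 < ls) (hεs : 0 < εs) {s b : ℝ}
    (hb : |b| ≤ ls) : |sat ls εs s - b| ≤ |s - b| := by
  rcases le_total 0 s with h | h
  · exact sat_contraction_aux hls hεs h hb
  · have e1 : sat ls εs s - b = -(sat ls εs (-s) - (-b)) := by rw [sat_neg]; ring
    have e2 : s - b = -((-s) - (-b)) := by ring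
    rw [e1, e2, abs_neg, abs_neg]
    exact sat_contraction_aux hls hεs (by linarith) (by rwa [abs_neg])

lemma enorm_le_of_abs_le {q : ℕ} (x y : EuclideanSpace ℝ (Fin q))
    (h : ∀ i, |x i| ≤ |y i|) : ‖x‖ ≤ ‖y‖ := by
  rw [EuclideanSpace.norm_eq, EuclideanSpace.norm_eq]
  apply Real.sqrt_le_sqrt
  apply Finset.sum_le_sum
  intro i _
  rw [Real.norm_eq_abs, Real.norm_eq_abs]
  exact pow_le_pow_left₀ (abs_nonneg _) (h i) 2

lemma enorm_le_sqrt_mul {q : ℕ} (x : EuclideanSpace ℝ (Fin q)) (M : ℝ) (hM : 0 ≤ M)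
    (h : ∀ i, |x i| ≤ M) : ‖x‖ ≤ Real.sqrt q * M := by
  rw [EuclideanSpace.norm_eq]
  have hsum : ∑ i, ‖x i‖ ^ 2 ≤ (q : ℝ) * M ^ 2 := by
    calc ∑ i, ‖x i‖ ^ 2 ≤ ∑ _i : Fin q, M ^ 2 :=
          Finset.sum_le_sum (fun i _ => by
            rw [Real.norm_eq_abs]; exact pow_le_pow_left₀ (abs_nonneg _) (h i) 2)
      _ = (q : ℝ) * M ^ 2 := by simp [Finset.sum_const]
  calc Real.sqrt (∑ i, ‖x i‖ ^ 2) ≤ Real.sqrt ((q : ℝ) * M ^ 2) := Real.sqrt_le_sqrt hsum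
    _ = Real.sqrt q * M := by
        rw [Real.sqrt_mul (by positivity), Real.sqrt_sq hM]

lemma ecoord_le_norm {q : ℕ} (x : EuclideanSpace ℝ (Fin q)) (i : Fin q) : |x i| ≤ ‖x‖ := by
  rw [EuclideanSpace.norm_eq]
  have h1 : |x i| ^ 2 ≤ ∑ j, ‖x j‖ ^ 2 := by
    rw [← Real.norm_eq_abs]
    exact Finset.single_le_sum (f := fun j => ‖x j‖ ^ 2) (fun j _ => by positivity)
      (Finset.mem_univ i)
  calc |x i| = Real.sqrt (|x i| ^ 2) := by rw [Real.sqrt_sq (abs_nonneg _)]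
    _ ≤ Real.sqrt (∑ j, ‖x j‖ ^ 2) := Real.sqrt_le_sqrt h1

/-- existence of the gain `γ_s` for the saturation error. -/
theorem statement0 (q : ℕ) (hq : 0 < q) (lθ ls εs : ℝ)
    (hlθ : 0 < lθ) (hls : lθ < ls) (hεs : 0 < εs) (hεs1 : εs ≤ 1) :
    ∃ (lγ : ℝ) (γs : ℝ → ℝ), 0 < lγ ∧ IsClassK γs ∧
      (∀ s ≥ (0:ℝ), γs s ≤ lγ ∧ γs s ≤ s) ∧
      ∀ (θt θ : EuclideanSpace ℝ (Fin q)), ‖θ‖ ≤ lθ →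
        ‖satv ls εs (θ + θt) - θ‖ ≤ γs ‖θt‖ := by
  have hls0 : 0 < ls := hlθ.trans hls
  set C : ℝ := Real.sqrt q * (ls + εs / 2) + lθ with hCdef
  have hsq : 0 < Real.sqrt q := Real.sqrt_pos.mpr (by exact_mod_cast hq)
  have hC : 0 < C := by positivity
  clear_value C
  set γs : ℝ → ℝ := fun s => if s ≤ C then s else C + (s - C) / (1 + |s - C|) with hγdef
  clear_value γs
  refine ⟨C + 1, γs, by linarith, ⟨?_, ?_, ?_⟩, ?_, ?_⟩
  · -- continuity
    rw [hγdef]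
    apply Continuous.continuousOn
    apply Continuous.if_le
    · exact continuous_id
    · apply Continuous.add continuous_const
      apply Continuous.div (by fun_prop) (by fun_prop)
      intro x; positivity
    · exact continuous_id
    · exact continuous_const
    · intro x hx; simp [hx]
  · -- strict mono
    intro x _ y _ hxy
    simp only [hγdef]
    rcases le_or_gt x C with h1 | h1
    · rcases le_or_gt y C with h2 | h2
      · simpa [h1, h2] using hxy
      · rw [if_pos h1, if_neg (not_le.mpr h2)]
        have : 0 < (y - C) / (1 + |y - C|) :=
          div_pos (by linarith) (by positivity)
        linarith
    · have h2 : C < y := h1.trans hxy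
      rw [if_neg (not_le.mpr h1), if_neg (not_le.mpr h2),
        abs_of_pos (by linarith : (0:ℝ) < x - C), abs_of_pos (by linarith : (0:ℝ) < y - C)]
      have : (x - C) / (1 + (x - C)) < (y - C) / (1 + (y - C)) := by
        rw [div_lt_div_iff₀ (by linarith) (by linarith)]
        nlinarith
      linarith
  · simp [hγdef, hC.le]
  · -- bounds
    intro s hs
    simp only [hγdef]
    split_ifs with h
    · constructor <;> linarith
    · push_neg at h
      have hd : (s - C) / (1 + |s - C|) ≤ 1 := by
        rw [abs_of_pos (by linarith : (0:ℝ) < s - C), div_le_one (by linarith)]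
        linarith
      have hd2 : (s - C) / (1 + |s - C|) ≤ s - C :=
        div_le_self (by linarith) (by linarith [abs_nonneg (s - C)])
      constructor <;> linarith
  · -- main estimate
    intro θt θ hθ
    have key1 : ‖satv ls εs (θ + θt) - θ‖ ≤ ‖θt‖ := by
      apply enorm_le_of_abs_le
      intro i
      have hcoord : |θ i| ≤ ls := le_of_lt (lt_of_le_of_lt ((ecoord_le_norm θ i).trans hθ) hls)
      have : (satv ls εs (θ + θt) - θ) i = sat ls εs (θ i + θt i) - θ i := by
        simp [satv]
      rw [this]
      have := sat_contraction (b := θ i) (s := θ i + θt i) hls0 hεs hcoord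
      simpa using this
    have key2 : ‖satv ls εs (θ + θt) - θ‖ ≤ C := by
      calc ‖satv ls εs (θ + θt) - θ‖ ≤ ‖satv ls εs (θ + θt)‖ + ‖θ‖ := norm_sub_le _ _
        _ ≤ Real.sqrt q * (ls + εs / 2) + lθ := by
            apply add_le_add _ hθ
            exact enorm_le_sqrt_mul _ _ (by linarith) (fun i => sat_abs_le hls0 hεs _)
        _ = C := hCdef.symm
    simp only [hγdef]
    split_ifs with h
    · exact key1
    · push_neg at h
      have : (0:ℝ) ≤ (‖θt‖ - C) / (1 + |‖θt‖ - C|) :=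
        div_nonneg (by linarith) (by positivity)
      linarith
end
end

section
/- Let dz be the dead-zone function with level l_θ > 0 and dzv its componentwise extension to ℝ^q. Then (θ′ − θ)ᵀ·dzv(θ′) ≥ 0 for all θ′ ∈ ℝ^q and all θ ∈ ℝ^q with |θ| ≤ l_θ (Euclidean norm). -/
open Real Set Filter
open scoped RealInnerProductSpace

noncomputable section

lemma dz_key (lθ : ℝ) (hlθ : 0 < lθ) (s t : ℝ) (ht : |t| ≤ lθ) :
    0 ≤ (s - t) * dz lθ s := by
  have ht1 : -lθ ≤ t := (abs_le.mp ht).1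
  have ht2 : t ≤ lθ := (abs_le.mp ht).2
  unfold dz
  by_cases h1 : |s| ≤ lθ
  · rw [if_pos h1, mul_zero]
  · push_neg at h1
    have hcase : lθ < s ∨ s < -lθ := by
      rcases lt_abs.mp h1 with h | h
      · exact Or.inl h
      · exact Or.inr (by linarith)
    rw [if_neg (not_le.mpr h1)]
    rcases hcase with hp | hn
    · have hst : 0 ≤ s - t := by linarith
      have habs : |s| = s := abs_of_pos (by linarith)
      have hsign : Real.sign s = 1 := Real.sign_of_pos (by linarith)
      by_cases h2 : |s| < lθ + 1
      · rw [if_pos h2, habs, hsign]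
        apply mul_nonneg hst
        apply mul_nonneg (mul_nonneg (by positivity) _) (by norm_num)
        nlinarith [habs ▸ h2]
      · rw [if_neg h2]
        apply mul_nonneg hst (by linarith)
    · have hst : s - t ≤ 0 := by linarith
      have habs : |s| = -s := abs_of_neg (by linarith)
      have hsign : Real.sign s = -1 := Real.sign_of_neg (by linarith)
      by_cases h2 : |s| < lθ + 1
      · rw [if_pos h2, habs, hsign]
        have hX : 0 ≤ (-s - lθ) ^ 2 * (2 * (lθ + 1) ^ 2 - (2 * lθ + 1) * -s) := by
          apply mul_nonneg (by positivity)
          nlinarith [habs ▸ h2]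
        nlinarith [mul_nonneg (neg_nonneg.mpr hst) hX]
      · rw [if_neg h2]
        nlinarith

/-- `(θ′ − θ)ᵀ·dzv(θ′) ≥ 0` whenever `|θ| ≤ l_θ`. -/
theorem statement3 (q : ℕ) (lθ : ℝ) (hlθ : 0 < lθ)
    (θ' θ : EuclideanSpace ℝ (Fin q)) (hθ : ‖θ‖ ≤ lθ) :
    0 ≤ ⟪θ' - θ, dzv lθ θ'⟫ := by
  rw [PiLp.inner_apply]
  apply Finset.sum_nonneg
  intro i _
  have hcoord : |θ i| ≤ lθ := by
    calc |θ i| = ‖θ i‖ := (Real.norm_eq_abs _).symm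
    _ ≤ ‖θ‖ := by
        rw [EuclideanSpace.norm_eq, ← Real.sqrt_sq (norm_nonneg (θ i))]
        apply Real.sqrt_le_sqrt
        exact Finset.single_le_sum (fun j _ => sq_nonneg ‖θ j‖) (Finset.mem_univ i)
    _ ≤ lθ := hθ
  simpa [dzv, PiLp.sub_apply, mul_comm] using dz_key lθ hlθ (θ' i) (θ i) hcoord
end
end

section
/- (Lemma 3, core estimate) Let V_est: [0,∞) × ℝ^q → [0,∞) be C¹ with constants a1, a2, a3, a4 > 0 such that a1|θ̃|² ≤ V_est(t, θ̃) ≤ a2|θ̃|², ∂V_est/∂t + ∂V_est/∂θ̃·H(θ, θ̃, x_r(t)) ≤ −a3|θ̃|², and |∂V_est/∂θ̃| ≤ a4|θ̃| for all t, θ̃. Suppose Δ: arguments (θ, θ̃, x_r, e) ↦ ℝ^q satisfies |Δ(θ, θ̃, x_r, e)| ≤ l_γ·κ2(|e|) for a constant l_γ > 0 and a class K function κ2. Set a* := (√a2·a4)/(√a1·a3). Then for every τ_est > 1 and all t ≥ 0, θ̃ ∈ ℝ^q, e ∈ ℝⁿ: if V_est(t, θ̃) ≥ a1·(τ_est·a*·l_γ)²·κ2(|e|)²,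 then ∂V_est/∂t(t, θ̃) + ∂V_est/∂θ̃(t, θ̃)·[H(θ, θ̃, x_r(t)) + Δ(θ, θ̃, x_r(t), e)] ≤ −(a3(τ_est − 1)/τ_est)·|θ̃|². -/
open Real Set Filter
open scoped RealInnerProductSpace

noncomputable section

/-- Lemma 3, core estimate: ISS implication for the perturbed
estimation error Lyapunov function. -/
theorem statement7 (q n : ℕ)
    (H : EuclideanSpace ℝ (Fin q) → EuclideanSpace ℝ (Fin q) →
      EuclideanSpace ℝ (Fin n) → EuclideanSpace ℝ (Fin q))
    (Δ : EuclideanSpace ℝ (Fin q) → EuclideanSpace ℝ (Fin q) →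
      EuclideanSpace ℝ (Fin n) → EuclideanSpace ℝ (Fin n) → EuclideanSpace ℝ (Fin q))
    (θ : EuclideanSpace ℝ (Fin q)) (xr : ℝ → EuclideanSpace ℝ (Fin n))
    (V : ℝ → EuclideanSpace ℝ (Fin q) → ℝ) (hV : ContDiff ℝ 1 (Function.uncurry V))
    (a1 a2 a3 a4 : ℝ) (ha1 : 0 < a1) (ha2 : 0 < a2) (ha3 : 0 < a3) (ha4 : 0 < a4)
    (hVb : ∀ t ≥ (0:ℝ), ∀ θt : EuclideanSpace ℝ (Fin q),
      a1 * ‖θt‖ ^ 2 ≤ V t θt ∧ V t θt ≤ a2 * ‖θt‖ ^ 2)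
    (hVd : ∀ t ≥ (0:ℝ), ∀ θt : EuclideanSpace ℝ (Fin q),
      fderiv ℝ (Function.uncurry V) (t, θt) (1, H θ θt (xr t)) ≤ -a3 * ‖θt‖ ^ 2)
    (hVg : ∀ t ≥ (0:ℝ), ∀ (θt v : EuclideanSpace ℝ (Fin q)),
      |fderiv ℝ (Function.uncurry V) (t, θt) (0, v)| ≤ a4 * ‖θt‖ * ‖v‖)
    (lγ : ℝ) (hlγ : 0 < lγ) (κ2 : ℝ → ℝ) (hκ2 : IsClassK κ2)
    (hΔ : ∀ (θ' θt : EuclideanSpace ℝ (Fin q)) (x e : EuclideanSpace ℝ (Fin n)),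
      ‖Δ θ' θt x e‖ ≤ lγ * κ2 ‖e‖) :
    ∀ τest > (1:ℝ), ∀ t ≥ (0:ℝ), ∀ (θt : EuclideanSpace ℝ (Fin q))
      (e : EuclideanSpace ℝ (Fin n)),
      V t θt ≥ a1 * (τest * (Real.sqrt a2 * a4 / (Real.sqrt a1 * a3)) * lγ) ^ 2 *
          κ2 ‖e‖ ^ 2 →
      fderiv ℝ (Function.uncurry V) (t, θt)
          (1, H θ θt (xr t) + Δ θ θt (xr t) e) ≤
        -(a3 * (τest - 1) / τest) * ‖θt‖ ^ 2 := by

  intro τest hτ t ht θt e hVge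
  have hτ0 : 0 < τest := lt_trans one_pos hτ
  set D := fderiv ℝ (Function.uncurry V) (t, θt) with hD
  have hsplit : ((1:ℝ), H θ θt (xr t) + Δ θ θt (xr t) e)
      = ((1:ℝ), H θ θt (xr t)) + ((0:ℝ), Δ θ θt (xr t) e) := by
    simp [Prod.ext_iff]
  have hlin : D (1, H θ θt (xr t) + Δ θ θt (xr t) e)
      = D (1, H θ θt (xr t)) + D (0, Δ θ θt (xr t) e) := by
    rw [hsplit, map_add]
  set K := κ2 ‖e‖ with hKdef
  have hK0 : 0 ≤ K := by
    have h0 : κ2 0 ≤ κ2 ‖e‖ := by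
      rcases eq_or_lt_of_le (norm_nonneg e) with h | h
      · rw [← h]
      · exact le_of_lt (hκ2.2.1 (Set.mem_Ici.2 le_rfl) (Set.mem_Ici.2 (norm_nonneg e)) h)
    simpa [hκ2.2.2] using h0
  have s1 : Real.sqrt a1 ^ 2 = a1 := Real.sq_sqrt ha1.le
  have s2 : Real.sqrt a2 ^ 2 = a2 := Real.sq_sqrt ha2.le
  have s1p : 0 < Real.sqrt a1 := Real.sqrt_pos.2 ha1
  have s2p : 0 < Real.sqrt a2 := Real.sqrt_pos.2 ha2
  have hub := (hVb t ht θt).2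
  have h1 : a1 * (τest * (Real.sqrt a2 * a4 / (Real.sqrt a1 * a3)) * lγ) ^ 2 * K ^ 2
      ≤ a2 * ‖θt‖ ^ 2 := le_trans hVge hub
  have key : a1 * (τest * (Real.sqrt a2 * a4 / (Real.sqrt a1 * a3)) * lγ) ^ 2 * K ^ 2
      = a2 * (τest * a4 * lγ * K / a3) ^ 2 := by
    field_simp
    linear_combination (a1 * K ^ 2) * s2 -
      (a2 * K ^ 2) * s1
  rw [key] at h1
  have hnorm2 : (τest * a4 * lγ * K / a3) ^ 2 ≤ ‖θt‖ ^ 2 :=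
    le_of_mul_le_mul_left (by linarith) ha2
  have hnorm : τest * a4 * lγ * K / a3 ≤ ‖θt‖ := by
    have h := Real.sqrt_le_sqrt hnorm2
    rwa [Real.sqrt_sq (by positivity), Real.sqrt_sq (norm_nonneg θt)] at h
  have hpert : D (0, Δ θ θt (xr t) e) ≤ a3 / τest * ‖θt‖ ^ 2 := by
    have h1' : D (0, Δ θ θt (xr t) e) ≤ a4 * ‖θt‖ * ‖Δ θ θt (xr t) e‖ :=
      le_trans (le_abs_self _) (hVg t ht θt _)
    have h2' : a4 * ‖θt‖ * ‖Δ θ θt (xr t) e‖ ≤ a4 * ‖θt‖ * (lγ * K) :=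
      mul_le_mul_of_nonneg_left (hΔ θ θt (xr t) e) (by positivity)
    have h3 : a4 * lγ * K ≤ a3 / τest * ‖θt‖ := by
      rw [div_le_iff₀ ha3] at hnorm
      rw [div_mul_eq_mul_div, le_div_iff₀ hτ0]
      nlinarith
    have h4 : ‖θt‖ * (a4 * lγ * K) ≤ ‖θt‖ * (a3 / τest * ‖θt‖) :=
      mul_le_mul_of_nonneg_left h3 (norm_nonneg θt)
    calc D (0, Δ θ θt (xr t) e) ≤ a4 * ‖θt‖ * (lγ * K) := le_trans h1' h2'
      _ = ‖θt‖ * (a4 * lγ * K) := by ring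
      _ ≤ ‖θt‖ * (a3 / τest * ‖θt‖) := h4
      _ = a3 / τest * ‖θt‖ ^ 2 := by ring
  have hH := hVd t ht θt
  rw [hlin]
  have heq : -a3 * ‖θt‖ ^ 2 + a3 / τest * ‖θt‖ ^ 2
      = -(a3 * (τest - 1) / τest) * ‖θt‖ ^ 2 := by
    field_simp
    ring
  linarith [hH, hpert]
end
end

section
/- Let α1, α2, α3, α4 be class K∞ functions, κ1 continuous nondecreasing, κ2 of class K, γ_s a concave class K function with γ_s(s) ≤ s for all s, and constants a*, l_γ > 0 and τ_err > τ′_err > 1. Suppose α3(s) ≥ τ_err·γ_s(a*·l_γ·κ2(α1^{-1}(α2(s))))·α4(s)·κ1(s) for all s ≥ 0. Then for all e ∈ ℝⁿ, θ̃ ∈ ℝ^q and every V ∈ [α1(|e|), α2(|e|)]: if |θ̃| ≤ τ′_err·a*·l_γ·κ2(α1^{-1}(V)), then −α3(|e|) + α4(|e|)·κ1(|e|)·γ_s(|θ̃|) ≤ −(τ_err − τ′_err)·γ_s(a*·l_γ·κ2(α1^{-1}(α2(|e|))))·α4(|e|)·κ1(|e|). -/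
open Real Set Filter
open scoped RealInnerProductSpace

noncomputable section

/-- key small-gain implication showing uniform ISS of the tracking
error subsystem. -/
theorem statement9 (q n : ℕ)
    (α1 α2 α3 α4 : ℝ → ℝ) (hα1 : IsClassKInfty α1) (hα2 : IsClassKInfty α2)
    (hα3 : IsClassKInfty α3) (hα4 : IsClassKInfty α4)
    -- the inverse of α1 on [0, ∞)
    (α1inv : ℝ → ℝ) (hα1inv : ∀ s ≥ (0:ℝ), α1inv (α1 s) = s ∧ α1 (α1inv s) = s)
    (κ1 : ℝ → ℝ) (hκ1c : ContinuousOn κ1 (Set.Ici 0)) (hκ1m : MonotoneOn κ1 (Set.Ici 0))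
    (hκ1nn : ∀ s ≥ (0:ℝ), 0 ≤ κ1 s)
    (κ2 : ℝ → ℝ) (hκ2 : IsClassK κ2)
    (γs : ℝ → ℝ) (hγs : IsClassK γs) (hγs_conc : ConcaveOn ℝ (Set.Ici 0) γs)
    (hγs_le : ∀ s ≥ (0:ℝ), γs s ≤ s)
    (ast lγ τerr τerr' : ℝ) (hast : 0 < ast) (hlγ : 0 < lγ)
    (hτ : 1 < τerr') (hττ : τerr' < τerr)
    -- the small-gain condition (27)
    (hsg : ∀ s ≥ (0:ℝ), α3 s ≥ τerr * γs (ast * lγ * κ2 (α1inv (α2 s))) * α4 s * κ1 s) :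
    ∀ (e : EuclideanSpace ℝ (Fin n)) (θt : EuclideanSpace ℝ (Fin q)) (V : ℝ),
      α1 ‖e‖ ≤ V → V ≤ α2 ‖e‖ →
      ‖θt‖ ≤ τerr' * ast * lγ * κ2 (α1inv V) →
      -α3 ‖e‖ + α4 ‖e‖ * κ1 ‖e‖ * γs ‖θt‖ ≤
        -((τerr - τerr') * γs (ast * lγ * κ2 (α1inv (α2 ‖e‖))) * α4 ‖e‖ * κ1 ‖e‖) := by
  obtain ⟨⟨hα1c, hα1m, hα10⟩, hα1t⟩ := hα1
  obtain ⟨⟨hα2c, hα2m, hα20⟩, _⟩ := hα2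
  obtain ⟨⟨hα4c, hα4m, hα40⟩, _⟩ := hα4
  obtain ⟨hκ2c, hκ2m, hκ20⟩ := hκ2
  obtain ⟨hγc, hγm, hγ0⟩ := hγs
  intro e θt V hV1 hV2 hθ
  have he : (0:ℝ) ≤ ‖e‖ := norm_nonneg e
  -- basic nonnegativity
  have hα1e : 0 ≤ α1 ‖e‖ := by
    have := hα1m.monotoneOn (le_refl (0:ℝ)) he he
    rwa [hα10] at this
  have hV0 : 0 ≤ V := le_trans hα1e hV1
  have hα2e : 0 ≤ α2 ‖e‖ := by
    have := hα2m.monotoneOn (le_refl (0:ℝ)) he he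
    rwa [hα20] at this
  have hα4e : 0 ≤ α4 ‖e‖ := by
    have := hα4m.monotoneOn (le_refl (0:ℝ)) he he
    rwa [hα40] at this
  have hκ1e : 0 ≤ κ1 ‖e‖ := hκ1nn _ he
  -- α1 is surjective onto [0,∞)
  have exist : ∀ v : ℝ, 0 ≤ v → ∃ s, 0 ≤ s ∧ α1 s = v := by
    intro v hv
    obtain ⟨M, hM1, hM0⟩ :=
      ((tendsto_atTop.mp hα1t v).and (eventually_ge_atTop (0:ℝ))).exists
    have hmem : v ∈ Set.Icc (α1 0) (α1 M) := ⟨by rw [hα10]; exact hv, hM1⟩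
    obtain ⟨s, hs, hfs⟩ :=
      intermediate_value_Icc hM0 (hα1c.mono (fun x hx => hx.1)) hmem
    exact ⟨s, hs.1, hfs⟩
  obtain ⟨sV, hsV0, hsV⟩ := exist V hV0
  obtain ⟨sW, hsW0, hsW⟩ := exist (α2 ‖e‖) hα2e
  have hinvV : α1inv V = sV := by rw [← hsV, (hα1inv sV hsV0).1]
  have hinvW : α1inv (α2 ‖e‖) = sW := by rw [← hsW, (hα1inv sW hsW0).1]
  have hsVW : sV ≤ sW := by
    rw [← hα1m.le_iff_le hsV0 hsW0, hsV, hsW]; exact hV2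
  -- κ2 nonneg and monotone
  have hκ2nn : ∀ t : ℝ, 0 ≤ t → 0 ≤ κ2 t := by
    intro t ht
    have := hκ2m.monotoneOn (le_refl (0:ℝ)) ht ht
    rwa [hκ20] at this
  set A := ast * lγ * κ2 (α1inv V) with hA
  set B := ast * lγ * κ2 (α1inv (α2 ‖e‖)) with hB
  have hAnn : 0 ≤ A := mul_nonneg (mul_nonneg hast.le hlγ.le)
    (hκ2nn _ (hinvV ▸ hsV0))
  have hBnn : 0 ≤ B := mul_nonneg (mul_nonneg hast.le hlγ.le)
    (hκ2nn _ (hinvW ▸ hsW0))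
  have hAB : A ≤ B := by
    have : κ2 (α1inv V) ≤ κ2 (α1inv (α2 ‖e‖)) := by
      rw [hinvV, hinvW]
      exact hκ2m.monotoneOn hsV0 hsW0 hsVW
    exact mul_le_mul_of_nonneg_left this (mul_nonneg hast.le hlγ.le)
  -- γs nonneg and monotone
  have hγnn : ∀ t : ℝ, 0 ≤ t → 0 ≤ γs t := by
    intro t ht
    have := hγm.monotoneOn (le_refl (0:ℝ)) ht ht
    rwa [hγ0] at this
  have hτ0 : (0:ℝ) < τerr' := lt_trans one_pos hτ
  -- step 1: γs ‖θt‖ ≤ γs (τerr' * A)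
  have hθA : ‖θt‖ ≤ τerr' * A := by
    rw [hA]; nlinarith [hθ]
  have hτA : (0:ℝ) ≤ τerr' * A := mul_nonneg hτ0.le hAnn
  have step1 : γs ‖θt‖ ≤ γs (τerr' * A) :=
    hγm.monotoneOn (norm_nonneg θt) hτA hθA
  -- step 2: concavity: γs (τerr' * A) ≤ τerr' * γs A
  have step2 : γs (τerr' * A) ≤ τerr' * γs A := by
    have hmem1 : τerr' * A ∈ Set.Ici (0:ℝ) := hτA
    have hmem2 : (0:ℝ) ∈ Set.Ici (0:ℝ) := Set.mem_Ici.mpr le_rfl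
    have ha : (0:ℝ) ≤ 1 / τerr' := by positivity
    have hb : (0:ℝ) ≤ 1 - 1 / τerr' := by
      rw [sub_nonneg]; rw [div_le_one hτ0]; exact hτ.le
    have hab : 1 / τerr' + (1 - 1 / τerr') = 1 := by ring
    have hconc := hγs_conc.2 hmem1 hmem2 ha hb hab
    simp only [smul_eq_mul, mul_zero, add_zero, hγ0] at hconc
    have harg : 1 / τerr' * (τerr' * A) = A := by
      field_simp
    rw [harg] at hconc
    have := mul_le_mul_of_nonneg_left hconc hτ0.le
    calc γs (τerr' * A) = τerr' * (1 / τerr' * γs (τerr' * A)) := by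
          field_simp
      _ ≤ τerr' * γs A := this
  -- step 3: γs A ≤ γs B
  have step3 : γs A ≤ γs B := hγm.monotoneOn hAnn hBnn hAB
  have hγB : 0 ≤ γs B := hγnn _ hBnn
  have hchain : γs ‖θt‖ ≤ τerr' * γs B := by
    calc γs ‖θt‖ ≤ τerr' * γs A := le_trans step1 step2
      _ ≤ τerr' * γs B := mul_le_mul_of_nonneg_left step3 hτ0.le
  have hsge := hsg ‖e‖ he
  nlinarith [mul_le_mul_of_nonneg_left hchain (mul_nonneg hα4e hκ1e)]
end
end

section
/- (Lemma 4) Under Assumptions 1 and 2, with ς continuous, there exist class K functions ϱ1, ϱ2, ϱ3 and a constant ϱ1* ≥ 0 such that, for all θ ∈ Θ, θ̃ ∈ ℝ^q, e, ε_e ∈ ℝⁿ and x_r ∈ ℝⁿ with |x_r| ≤ r1: (i) |φ̃_s(θ, θ̃, e + x_r)| ≤ (ϱ1(|e|) + ϱ1*)·γ_s(|θ̃|); and (ii) |Δ_f(θ, θ̃, x_r, e, ε_e)| ≤ (ϱ2(|e|) + ϱ3(|ε_e|))·γ_s(|θ̃|), where Δ_f(θ, θ̃, x_r, e, ε_e)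 := ς(x_r)·φ̃_s(θ, θ̃, x_r) − ς(e + x_r − ε_e)·φ̃_s(θ, θ̃, e + x_r). -/
open Real Set Filter
open scoped RealInnerProductSpace

noncomputable section

/-- `φ̃_s(θ†, θ‡, x) := φ(satv(θ† + θ‡), x) − φ(satv(θ†), x)`. -/
noncomputable def tphis {q n : ℕ} (ls εs : ℝ)
    (φ : EuclideanSpace ℝ (Fin q) → EuclideanSpace ℝ (Fin n) → EuclideanSpace ℝ (Fin n))
    (θ θt : EuclideanSpace ℝ (Fin q)) (x : EuclideanSpace ℝ (Fin n)) :
    EuclideanSpace ℝ (Fin n) :=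
  φ (satv ls εs (θ + θt)) x - φ (satv ls εs θ) x


section AuxLemmas

/-- Turn a monotone function vanishing at `0⁺` into a class-K majorant. -/
lemma exists_classK_majorant {f : ℝ → ℝ} (hmono : MonotoneOn f (Set.Ici 0)) (hf0 : f 0 = 0)
    (hlim : Filter.Tendsto f (nhdsWithin 0 (Set.Ici 0)) (nhds 0)) :
    ∃ ρ : ℝ → ℝ, IsClassK ρ ∧ ∀ s ≥ (0:ℝ), f s ≤ ρ s := by
  set g : ℝ → ℝ := fun t => f (max t 0) with hgdef
  have hgmono : Monotone g := fun a b hab =>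
    hmono (Set.mem_Ici.mpr (le_max_right _ _)) (Set.mem_Ici.mpr (le_max_right _ _)) (max_le_max hab le_rfl)
  have hgnn : ∀ t, 0 ≤ g t := fun t => by
    have : f 0 ≤ f (max t 0) := hmono (Set.mem_Ici.mpr le_rfl) (Set.mem_Ici.mpr (le_max_right _ _)) (le_max_right _ _)
    simpa [hf0] using this
  have hgint : ∀ a b : ℝ, IntervalIntegrable g MeasureTheory.volume a b := fun a b =>
    (hgmono.monotoneOn _).intervalIntegrable
  set F : ℝ → ℝ := fun x => ∫ t in (0:ℝ)..x, g t with hFdef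
  have hFcont : Continuous F := intervalIntegral.continuous_primitive hgint 0
  set Φ : ℝ → ℝ := fun s => ∫ u in (1:ℝ)..2, g (s * u) with hΦdef
  have hint : ∀ s : ℝ, IntervalIntegrable (fun u => g (s * u)) MeasureTheory.volume 1 2 := by
    intro s
    rcases le_total 0 s with hs | hs
    · exact MonotoneOn.intervalIntegrable fun a _ b _ hab =>
        hgmono (mul_le_mul_of_nonneg_left hab hs)
    · exact AntitoneOn.intervalIntegrable fun a _ b _ hab =>
        hgmono (mul_le_mul_of_nonpos_left hab hs)
  have hΦmono : Monotone Φ := by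
    intro s1 s2 h12
    refine intervalIntegral.integral_mono_on (by norm_num) (hint s1) (hint s2) ?_
    intro u hu
    exact hgmono (mul_le_mul_of_nonneg_right h12 (le_trans zero_le_one hu.1))
  have hΦlb : ∀ s : ℝ, 0 ≤ s → g s ≤ Φ s := by
    intro s hs
    have h1 : ∫ u in (1:ℝ)..2, g s = g s := by norm_num
    rw [← h1]
    refine intervalIntegral.integral_mono_on (by norm_num) intervalIntegrable_const (hint s) ?_
    intro u hu
    exact hgmono (by nlinarith [hu.1])
  have hΦnn : ∀ s, 0 ≤ Φ s :=
    fun s => intervalIntegral.integral_nonneg (by norm_num) fun u _ => hgnn _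
  have hΦ0 : Φ 0 = 0 := by
    have h1 : ∀ u : ℝ, g (0 * u) = 0 := fun u => by simp [hgdef, hf0]
    have : Φ 0 = ∫ u in (1:ℝ)..2, (0:ℝ) := by
      rw [hΦdef]
      exact intervalIntegral.integral_congr fun u _ => h1 u
    rw [this]; simp
  have key : ∀ s : ℝ, s ≠ 0 → Φ s = s⁻¹ * (F (s * 2) - F (s * 1)) := by
    intro s hs
    have h1 : Φ s = s⁻¹ • ∫ x in (s*1)..(s*2), g x := intervalIntegral.integral_comp_mul_left g hs
    have h2 : F (s*2) - F (s*1) = ∫ x in (s*1)..(s*2), g x :=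
      intervalIntegral.integral_interval_sub_left (hgint 0 (s*2)) (hgint 0 (s*1))
    rw [h1, h2]; simp [smul_eq_mul]
  have hΦcont : ContinuousOn Φ (Set.Ici 0) := by
    intro s0 hs0
    rcases eq_or_lt_of_le (Set.mem_Ici.mp hs0 : (0:ℝ) ≤ s0) with h | h
    · subst h
      rw [ContinuousWithinAt, hΦ0]
      have hub : ∀ s ∈ Set.Ici (0:ℝ), Φ s ≤ g (2 * s) := by
        intro s hs
        have hs' : (0:ℝ) ≤ s := hs
        have h1 : ∫ u in (1:ℝ)..2, g (2*s) = g (2*s) := by norm_num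
        rw [← h1]
        refine intervalIntegral.integral_mono_on (by norm_num) (hint s) intervalIntegrable_const ?_
        intro u hu
        exact hgmono (by nlinarith [hu.2, hs'])
      have h2a : Tendsto (fun s : ℝ => 2 * s) (nhdsWithin 0 (Set.Ici 0))
          (nhdsWithin 0 (Set.Ici 0)) := by
        apply tendsto_nhdsWithin_of_tendsto_nhds_of_eventually_within
        · have := (continuous_const.mul continuous_id : Continuous fun s : ℝ => 2 * s).tendsto 0
          exact ((continuous_mul_left (2:ℝ)).tendsto' 0 0 (by simp)).mono_left nhdsWithin_le_nhds
        · filter_upwards [eventually_mem_nhdsWithin] with s hs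
          exact mul_nonneg (by norm_num) (Set.mem_Ici.mp hs)
      have hg2 : Tendsto (fun s => g (2 * s)) (nhdsWithin 0 (Set.Ici 0)) (nhds 0) := by
        have h1 : Tendsto (fun s => f (2 * s)) (nhdsWithin 0 (Set.Ici 0)) (nhds 0) := hlim.comp h2a
        refine h1.congr' ?_
        filter_upwards [eventually_mem_nhdsWithin] with s hs
        simp [hgdef, max_eq_left (mul_nonneg (by norm_num : (0:ℝ) ≤ 2) hs)]
      refine tendsto_of_tendsto_of_tendsto_of_le_of_le' tendsto_const_nhds hg2 ?_ ?_
      · exact Filter.Eventually.of_forall fun s => hΦnn s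
      · filter_upwards [eventually_mem_nhdsWithin] with s hs using hub s hs
    · have hG : ContinuousAt (fun s : ℝ => s⁻¹ * (F (s * 2) - F (s * 1))) s0 := by
        apply ContinuousAt.mul
        · exact (continuousAt_inv₀ (ne_of_gt h)).comp continuousAt_id
        · exact ((hFcont.comp (continuous_id.mul continuous_const)).continuousAt).sub
            ((hFcont.comp (continuous_id.mul continuous_const)).continuousAt)
      have heq : (fun s : ℝ => s⁻¹ * (F (s * 2) - F (s * 1))) =ᶠ[nhds s0] Φ := by
        filter_upwards [isOpen_Ioi.mem_nhds h] with s hs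
        exact (key s (ne_of_gt hs)).symm
      exact ((hG.congr heq).continuousWithinAt)
  refine ⟨fun s => s + Φ s, ⟨?_, ?_, ?_⟩, ?_⟩
  · exact (continuous_id.continuousOn).add hΦcont
  · intro a _ b _ hab
    exact add_lt_add_of_lt_of_le hab (hΦmono hab.le)
  · simp [hΦ0]
  · intro s hs
    have h1 : f s = g s := by simp [hgdef, max_eq_left hs]
    have h2 := hΦlb s hs
    show f s ≤ s + Φ s
    linarith

lemma tendsto_zero_of_bound {m : ℝ → ℝ} (h0 : ∀ s, 0 ≤ s → 0 ≤ m s)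
    (h : ∀ ε > (0:ℝ), ∃ δ > (0:ℝ), ∀ s, 0 ≤ s → s < δ → m s ≤ ε) :
    Filter.Tendsto m (nhdsWithin 0 (Set.Ici 0)) (nhds 0) := by
  rw [Metric.tendsto_nhdsWithin_nhds]
  intro ε hε
  obtain ⟨δ, hδ, hd⟩ := h (ε/2) (by linarith)
  refine ⟨δ, hδ, fun s hs hdist => ?_⟩
  have hs0 : (0:ℝ) ≤ s := hs
  rw [Real.dist_eq, sub_zero, abs_of_nonneg hs0] at hdist
  rw [Real.dist_eq, sub_zero, abs_of_nonneg (h0 s hs0)]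
  linarith [hd s hs0 hdist]

lemma abs_sat_le {ls εs : ℝ} (hεs : 0 < εs) (hεs1 : εs ≤ 1) (s : ℝ) :
    |sat ls εs s| ≤ |ls| + 2 := by
  have hsign : |Real.sign s| ≤ 1 := by
    rcases lt_trichotomy s 0 with h | h | h
    · rw [Real.sign_of_neg h]; norm_num
    · rw [h, Real.sign_zero]; norm_num
    · rw [Real.sign_of_pos h]; norm_num
  rw [sat]
  split_ifs with h1 h2
  · calc |s| ≤ ls := h1
      _ ≤ |ls| + 2 := by linarith [le_abs_self ls]
  · push_neg at h1
    have h3 : 0 ≤ |s| - ls := by linarith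
    have h4 : |s| - ls ≤ εs := by linarith
    have habs : |Real.sign s * (|s| - ls) ^ 2 / (2 * εs)| ≤ εs / 2 := by
      rw [abs_div, abs_mul, abs_of_nonneg (sq_nonneg (|s| - ls)),
        abs_of_pos (by linarith : (0:ℝ) < 2 * εs)]
      rw [div_le_iff₀ (by linarith : (0:ℝ) < 2 * εs)]
      nlinarith [abs_nonneg (Real.sign s), sq_nonneg (|s| - ls)]
    calc |s - Real.sign s * (|s| - ls) ^ 2 / (2 * εs)|
        ≤ |s| + |Real.sign s * (|s| - ls) ^ 2 / (2 * εs)| := abs_sub _ _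
      _ ≤ (ls + εs) + εs/2 := add_le_add h2 habs
      _ ≤ |ls| + 2 := by linarith [le_abs_self ls]
  · rw [abs_mul]
    calc |ls + εs/2| * |Real.sign s| ≤ |ls + εs/2| * 1 :=
          mul_le_mul_of_nonneg_left hsign (abs_nonneg _)
      _ = |ls + εs/2| := mul_one _
      _ ≤ |ls| + |εs/2| := abs_add_le _ _
      _ ≤ |ls| + 2 := by rw [abs_of_pos (by linarith : (0:ℝ) < εs/2)]; linarith

lemma coord_abs_le_norm {k : ℕ} (x : EuclideanSpace ℝ (Fin k)) (i : Fin k) : |x i| ≤ ‖x‖ := by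
  rw [EuclideanSpace.norm_eq]
  have h1 : |x i| = Real.sqrt (‖x i‖ ^ 2) := by
    rw [Real.sqrt_sq_eq_abs, Real.norm_eq_abs, abs_abs]
  rw [h1]
  apply Real.sqrt_le_sqrt
  exact Finset.single_le_sum (fun j _ => sq_nonneg ‖x j‖) (Finset.mem_univ i)

lemma norm_satv_le {k : ℕ} {ls εs : ℝ} (hεs : 0 < εs) (hεs1 : εs ≤ 1)
    (w : EuclideanSpace ℝ (Fin k)) :
    ‖satv ls εs w‖ ≤ Real.sqrt k * (|ls| + 2) := by
  have hl2 : (0:ℝ) ≤ |ls| + 2 := by positivity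
  rw [EuclideanSpace.norm_eq]
  have h1 : ∑ i, ‖satv ls εs w i‖ ^ 2 ≤ ∑ _i : Fin k, (|ls| + 2)^2 := by
    refine Finset.sum_le_sum fun i _ => ?_
    have h := abs_sat_le (ls := ls) hεs hεs1 (w i)
    have h2 : ‖satv ls εs w i‖ = |sat ls εs (w i)| := by
      rw [Real.norm_eq_abs]; rfl
    rw [h2]
    nlinarith [abs_nonneg (sat ls εs (w i))]
  calc Real.sqrt (∑ i, ‖satv ls εs w i‖ ^ 2) ≤ Real.sqrt ((k : ℝ) * (|ls| + 2)^2) := by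
        apply Real.sqrt_le_sqrt
        simpa [Finset.sum_const, Finset.card_univ] using h1
    _ = Real.sqrt k * (|ls| + 2) := by
        rw [Real.sqrt_mul (Nat.cast_nonneg k), Real.sqrt_sq hl2]

end AuxLemmas


set_option maxHeartbeats 2000000 in
/-- Lemma 4: bounds on `φ̃_s` and on the filter mismatch `Δ_f`. -/
theorem statement15 (q n : ℕ)
    (Θ : Set (EuclideanSpace ℝ (Fin q))) (hΘ : IsCompact Θ)
    (lθ ls εs r1 : ℝ) (hlθ : ∀ ϑ ∈ Θ, ‖ϑ‖ ≤ lθ) (hls : lθ < ls)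
    (hεs : 0 < εs) (hεs1 : εs ≤ 1) (hr1 : 0 < r1)
    -- Assumption 1
    (φ : EuclideanSpace ℝ (Fin q) → EuclideanSpace ℝ (Fin n) → EuclideanSpace ℝ (Fin n))
    (Dφ : EuclideanSpace ℝ (Fin q) → EuclideanSpace ℝ (Fin n) →
      (EuclideanSpace ℝ (Fin q) →L[ℝ] EuclideanSpace ℝ (Fin n)))
    (hφ : ∀ ϑ x, HasFDerivAt (fun ϑ' => φ ϑ' x) (Dφ ϑ x) ϑ)
    (hDφ : Continuous fun p : EuclideanSpace ℝ (Fin q) × EuclideanSpace ℝ (Fin n) =>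
      Dφ p.1 p.2)
    -- ς continuous
    (ς : EuclideanSpace ℝ (Fin n) →
      (EuclideanSpace ℝ (Fin n) →L[ℝ] EuclideanSpace ℝ (Fin q))) (hς : Continuous ς)
    -- γ_s
    (γs : ℝ → ℝ) (hγs : IsClassK γs) (hγs_le : ∀ s ≥ (0:ℝ), γs s ≤ s)
    (hγs_sat : ∀ (θt : EuclideanSpace ℝ (Fin q)), ∀ ϑ ∈ Θ,
      ‖satv ls εs (ϑ + θt) - ϑ‖ ≤ γs ‖θt‖) :
    ∃ (ϱ1 ϱ2 ϱ3 : ℝ → ℝ) (ϱ1s : ℝ), IsClassK ϱ1 ∧ IsClassK ϱ2 ∧ IsClassK ϱ3 ∧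
      0 ≤ ϱ1s ∧
      ∀ θ ∈ Θ, ∀ (θt : EuclideanSpace ℝ (Fin q))
        (e εe xr : EuclideanSpace ℝ (Fin n)), ‖xr‖ ≤ r1 →
        ‖tphis ls εs φ θ θt (e + xr)‖ ≤ (ϱ1 ‖e‖ + ϱ1s) * γs ‖θt‖ ∧
        ‖ς xr (tphis ls εs φ θ θt xr) -
            ς (e + xr - εe) (tphis ls εs φ θ θt (e + xr))‖ ≤
          (ϱ2 ‖e‖ + ϱ3 ‖εe‖) * γs ‖θt‖ := by
  classical
  have hγmono : MonotoneOn γs (Set.Ici 0) := hγs.2.1.monotoneOn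
  have hγ0 : γs 0 = 0 := hγs.2.2
  -- the compact set capturing all saturated parameters
  set Rθ : ℝ := Real.sqrt q * (|ls| + 2) + |lθ| + 1 with hRθdef
  have hRθ0 : (0:ℝ) ≤ Rθ := by positivity
  set K : Set (EuclideanSpace ℝ (Fin q)) := Metric.closedBall 0 Rθ with hKdef
  have hKcomp : IsCompact K := isCompact_closedBall _ _
  have hKconv : Convex ℝ K := convex_closedBall _ _
  have hsatK : ∀ w : EuclideanSpace ℝ (Fin q), satv ls εs w ∈ K := by
    intro w
    rw [hKdef, mem_closedBall_zero_iff]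
    have h1 := norm_satv_le (ls := ls) hεs hεs1 w
    have h2 : (0:ℝ) ≤ |lθ| := abs_nonneg _
    rw [hRθdef]; linarith
  have hθK : ∀ ϑ ∈ Θ, ϑ ∈ K := by
    intro ϑ hϑ
    rw [hKdef, mem_closedBall_zero_iff]
    have h1 := hlθ ϑ hϑ
    have h2 : lθ ≤ |lθ| := le_abs_self _
    have h3 : (0:ℝ) ≤ Real.sqrt q * (|ls| + 2) := by positivity
    rw [hRθdef]; linarith
  have h0K : (0 : EuclideanSpace ℝ (Fin q)) ∈ K := by
    rw [hKdef, mem_closedBall_zero_iff]; simpa using hRθ0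
  have hsatθ : ∀ ϑ ∈ Θ, satv ls εs ϑ = ϑ := by
    intro ϑ hϑ
    ext i
    have h1 : |ϑ i| ≤ ls :=
      le_trans (coord_abs_le_norm ϑ i) (le_trans (hlθ ϑ hϑ) hls.le)
    show sat ls εs (ϑ i) = ϑ i
    rw [sat, if_pos h1]
  -- constant bound on Dφ near the reference set
  have hgCcont : Continuous (fun p : EuclideanSpace ℝ (Fin q) × EuclideanSpace ℝ (Fin n) =>
      ‖Dφ p.1 p.2‖) := hDφ.norm
  set gC : ℝ := sSup ((fun p : EuclideanSpace ℝ (Fin q) × EuclideanSpace ℝ (Fin n) =>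
      ‖Dφ p.1 p.2‖) '' (K ×ˢ Metric.closedBall 0 r1)) with hgCdef
  have hgCbdd : BddAbove ((fun p : EuclideanSpace ℝ (Fin q) × EuclideanSpace ℝ (Fin n) =>
      ‖Dφ p.1 p.2‖) '' (K ×ˢ Metric.closedBall 0 r1)) :=
    ((hKcomp.prod (isCompact_closedBall _ _)).image hgCcont).bddAbove
  have hgCle : ∀ ϑ ∈ K, ∀ y : EuclideanSpace ℝ (Fin n), ‖y‖ ≤ r1 → ‖Dφ ϑ y‖ ≤ gC := by
    intro ϑ hϑ y hy
    exact le_csSup hgCbdd ⟨(ϑ, y), ⟨hϑ, mem_closedBall_zero_iff.mpr hy⟩, rfl⟩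
  have hgC0 : 0 ≤ gC :=
    Real.sSup_nonneg fun x hx => by obtain ⟨p, _, rfl⟩ := hx; exact norm_nonneg _
  -- modulus of continuity of Dφ in its second argument
  set ω : ℝ → ℝ := fun s => sSup ((fun p :
      (EuclideanSpace ℝ (Fin q) × EuclideanSpace ℝ (Fin n)) × EuclideanSpace ℝ (Fin n) =>
      ‖Dφ p.1.1 (p.1.2 + p.2) - Dφ p.1.1 p.1.2‖) ''
      ((K ×ˢ Metric.closedBall 0 r1) ×ˢ Metric.closedBall 0 s)) with hωdef
  have hωcont : Continuous (fun p :
      (EuclideanSpace ℝ (Fin q) × EuclideanSpace ℝ (Fin n)) × EuclideanSpace ℝ (Fin n) =>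
      ‖Dφ p.1.1 (p.1.2 + p.2) - Dφ p.1.1 p.1.2‖) := by
    apply Continuous.norm
    apply Continuous.sub
    · exact hDφ.comp ((continuous_fst.comp continuous_fst).prodMk
        ((continuous_snd.comp continuous_fst).add continuous_snd))
    · exact hDφ.comp ((continuous_fst.comp continuous_fst).prodMk
        (continuous_snd.comp continuous_fst))
  have hωbdd : ∀ s : ℝ, BddAbove ((fun p :
      (EuclideanSpace ℝ (Fin q) × EuclideanSpace ℝ (Fin n)) × EuclideanSpace ℝ (Fin n) =>
      ‖Dφ p.1.1 (p.1.2 + p.2) - Dφ p.1.1 p.1.2‖) ''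
      ((K ×ˢ Metric.closedBall 0 r1) ×ˢ Metric.closedBall 0 s)) := fun s =>
    (((hKcomp.prod (isCompact_closedBall _ _)).prod (isCompact_closedBall _ _)).image
      hωcont).bddAbove
  have hωne : ∀ s : ℝ, 0 ≤ s → (((K ×ˢ Metric.closedBall (0 : EuclideanSpace ℝ (Fin n)) r1) ×ˢ
      Metric.closedBall (0 : EuclideanSpace ℝ (Fin n)) s)).Nonempty := by
    intro s hs
    refine ⟨(((0 : EuclideanSpace ℝ (Fin q)), (0 : EuclideanSpace ℝ (Fin n))),
      (0 : EuclideanSpace ℝ (Fin n))), Set.mem_prod.mpr ⟨Set.mem_prod.mpr ⟨h0K, ?_⟩, ?_⟩⟩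
    · rw [mem_closedBall_zero_iff, norm_zero]; exact hr1.le
    · rw [mem_closedBall_zero_iff, norm_zero]; exact hs
  have hωle : ∀ s : ℝ, ∀ ϑ ∈ K, ∀ y : EuclideanSpace ℝ (Fin n), ‖y‖ ≤ r1 →
      ∀ d : EuclideanSpace ℝ (Fin n), ‖d‖ ≤ s → ‖Dφ ϑ (y + d) - Dφ ϑ y‖ ≤ ω s := by
    intro s ϑ hϑ y hy d hd
    exact le_csSup (hωbdd s) ⟨((ϑ, y), d),
      ⟨⟨hϑ, mem_closedBall_zero_iff.mpr hy⟩, mem_closedBall_zero_iff.mpr hd⟩, rfl⟩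
  have hωnn : ∀ s : ℝ, 0 ≤ s → 0 ≤ ω s := fun s hs =>
    Real.sSup_nonneg fun x hx => by obtain ⟨p, _, rfl⟩ := hx; exact norm_nonneg _
  have hωmono : MonotoneOn ω (Set.Ici 0) := by
    intro s1 hs1 s2 hs2 h12
    refine csSup_le_csSup (hωbdd s2) ((hωne s1 hs1).image _) ?_
    exact Set.image_mono (Set.prod_mono subset_rfl
      (Metric.closedBall_subset_closedBall h12))
  have hω0 : ω 0 = 0 := by
    refine le_antisymm ?_ (hωnn 0 le_rfl)
    refine csSup_le ((hωne 0 le_rfl).image _) ?_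
    rintro x ⟨⟨⟨ϑ, y⟩, d⟩, ⟨_, hd⟩, rfl⟩
    rw [mem_closedBall_zero_iff] at hd
    have hd0 : d = 0 := norm_le_zero_iff.mp hd
    simp [hd0]
  have hωlim : Tendsto ω (nhdsWithin 0 (Set.Ici 0)) (nhds 0) := by
    apply tendsto_zero_of_bound hωnn
    intro ε hε
    have hUC := (hKcomp.prod (isCompact_closedBall (0 : EuclideanSpace ℝ (Fin n))
      (r1 + 1))).uniformContinuousOn_of_continuous hDφ.continuousOn
    rw [Metric.uniformContinuousOn_iff] at hUC
    obtain ⟨δ, hδ, hd⟩ := hUC ε hε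
    refine ⟨min δ 1, lt_min hδ one_pos, ?_⟩
    intro s hs0 hsδ
    have hs1 : s ≤ 1 := le_of_lt (lt_of_lt_of_le hsδ (min_le_right _ _))
    have hsδ' : s < δ := lt_of_lt_of_le hsδ (min_le_left _ _)
    refine csSup_le ((hωne s hs0).image _) ?_
    rintro x ⟨⟨⟨ϑ, y⟩, d⟩, ⟨⟨hϑ, hy⟩, hdb⟩, rfl⟩
    rw [mem_closedBall_zero_iff] at hy hdb
    have h1 : (ϑ, y + d) ∈ K ×ˢ Metric.closedBall (0 : EuclideanSpace ℝ (Fin n)) (r1 + 1) :=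
      ⟨hϑ, mem_closedBall_zero_iff.mpr (le_trans (norm_add_le _ _) (by linarith))⟩
    have h2 : (ϑ, y) ∈ K ×ˢ Metric.closedBall (0 : EuclideanSpace ℝ (Fin n)) (r1 + 1) :=
      ⟨hϑ, mem_closedBall_zero_iff.mpr (by linarith)⟩
    have h3 : dist ((ϑ, y + d)) ((ϑ, y)) < δ := by
      rw [Prod.dist_eq]
      apply max_lt (by simpa using hδ)
      rw [dist_eq_norm]
      have he : y + d - y = d := by abel
      rw [he]
      exact lt_of_le_of_lt hdb hsδ'
    have h4 := hd _ h1 _ h2 h3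
    rw [dist_eq_norm] at h4
    exact le_of_lt h4
  -- bound and moduli for ς
  set Cς : ℝ := sSup ((fun y : EuclideanSpace ℝ (Fin n) => ‖ς y‖) ''
      Metric.closedBall 0 r1) with hCςdef
  have hCςbdd : BddAbove ((fun y : EuclideanSpace ℝ (Fin n) => ‖ς y‖) ''
      Metric.closedBall 0 r1) := ((isCompact_closedBall _ _).image hς.norm).bddAbove
  have hCςle : ∀ y : EuclideanSpace ℝ (Fin n), ‖y‖ ≤ r1 → ‖ς y‖ ≤ Cς := fun y hy =>
    le_csSup hCςbdd ⟨y, mem_closedBall_zero_iff.mpr hy, rfl⟩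
  have hCς0 : 0 ≤ Cς :=
    Real.sSup_nonneg fun x hx => by obtain ⟨p, _, rfl⟩ := hx; exact norm_nonneg _
  have hςcont2 : Continuous (fun p : EuclideanSpace ℝ (Fin n) × EuclideanSpace ℝ (Fin n) =>
      ‖ς (p.1 + p.2) - ς p.1‖) :=
    ((hς.comp (continuous_fst.add continuous_snd)).sub (hς.comp continuous_fst)).norm
  set ως : ℝ → ℝ := fun s => sSup ((fun p :
      EuclideanSpace ℝ (Fin n) × EuclideanSpace ℝ (Fin n) => ‖ς (p.1 + p.2) - ς p.1‖) ''
      (Metric.closedBall 0 r1 ×ˢ Metric.closedBall 0 s)) with hωςdef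
  have hωςbdd : ∀ s : ℝ, BddAbove ((fun p :
      EuclideanSpace ℝ (Fin n) × EuclideanSpace ℝ (Fin n) => ‖ς (p.1 + p.2) - ς p.1‖) ''
      (Metric.closedBall 0 r1 ×ˢ Metric.closedBall 0 s)) := fun s =>
    (((isCompact_closedBall _ _).prod (isCompact_closedBall _ _)).image hςcont2).bddAbove
  have hωςne : ∀ s : ℝ, 0 ≤ s → ((Metric.closedBall (0 : EuclideanSpace ℝ (Fin n)) r1 ×ˢ
      Metric.closedBall (0 : EuclideanSpace ℝ (Fin n)) s)).Nonempty := by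
    intro s hs
    refine ⟨((0 : EuclideanSpace ℝ (Fin n)), (0 : EuclideanSpace ℝ (Fin n))),
      Set.mem_prod.mpr ⟨?_, ?_⟩⟩
    · rw [mem_closedBall_zero_iff, norm_zero]; exact hr1.le
    · rw [mem_closedBall_zero_iff, norm_zero]; exact hs
  have hωςle : ∀ s : ℝ, ∀ y : EuclideanSpace ℝ (Fin n), ‖y‖ ≤ r1 →
      ∀ d : EuclideanSpace ℝ (Fin n), ‖d‖ ≤ s → ‖ς (y + d) - ς y‖ ≤ ως s := by
    intro s y hy d hd
    exact le_csSup (hωςbdd s) ⟨(y, d),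
      ⟨mem_closedBall_zero_iff.mpr hy, mem_closedBall_zero_iff.mpr hd⟩, rfl⟩
  have hωςnn : ∀ s : ℝ, 0 ≤ s → 0 ≤ ως s := fun s hs =>
    Real.sSup_nonneg fun x hx => by obtain ⟨p, _, rfl⟩ := hx; exact norm_nonneg _
  have hωςmono : MonotoneOn ως (Set.Ici 0) := by
    intro s1 hs1 s2 hs2 h12
    refine csSup_le_csSup (hωςbdd s2) ((hωςne s1 hs1).image _) ?_
    exact Set.image_mono (Set.prod_mono subset_rfl
      (Metric.closedBall_subset_closedBall h12))
  have hως0 : ως 0 = 0 := by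
    refine le_antisymm ?_ (hωςnn 0 le_rfl)
    refine csSup_le ((hωςne 0 le_rfl).image _) ?_
    rintro x ⟨⟨y, d⟩, ⟨_, hd⟩, rfl⟩
    rw [mem_closedBall_zero_iff] at hd
    have hd0 : d = 0 := norm_le_zero_iff.mp hd
    simp [hd0]
  have hωςlim : Tendsto ως (nhdsWithin 0 (Set.Ici 0)) (nhds 0) := by
    apply tendsto_zero_of_bound hωςnn
    intro ε hε
    have hUC := (isCompact_closedBall (0 : EuclideanSpace ℝ (Fin n))
      (r1 + 3)).uniformContinuousOn_of_continuous hς.continuousOn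
    rw [Metric.uniformContinuousOn_iff] at hUC
    obtain ⟨δ, hδ, hd⟩ := hUC ε hε
    refine ⟨min δ 1, lt_min hδ one_pos, ?_⟩
    intro s hs0 hsδ
    have hs1 : s ≤ 1 := le_of_lt (lt_of_lt_of_le hsδ (min_le_right _ _))
    have hsδ' : s < δ := lt_of_lt_of_le hsδ (min_le_left _ _)
    refine csSup_le ((hωςne s hs0).image _) ?_
    rintro x ⟨⟨y, d⟩, ⟨hy, hdb⟩, rfl⟩
    rw [mem_closedBall_zero_iff] at hy hdb
    have h1 : y + d ∈ Metric.closedBall (0 : EuclideanSpace ℝ (Fin n)) (r1 + 3) :=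
      mem_closedBall_zero_iff.mpr (le_trans (norm_add_le _ _) (by linarith))
    have h2 : y ∈ Metric.closedBall (0 : EuclideanSpace ℝ (Fin n)) (r1 + 3) :=
      mem_closedBall_zero_iff.mpr (by linarith)
    have h3 : dist (y + d) y < δ := by
      rw [dist_eq_norm]
      have he : y + d - y = d := by abel
      rw [he]
      exact lt_of_le_of_lt hdb hsδ'
    have h4 := hd _ h1 _ h2 h3
    rw [dist_eq_norm] at h4
    exact le_of_lt h4
  set Ως : ℝ → ℝ := fun s => sSup ((fun p :
      EuclideanSpace ℝ (Fin n) × EuclideanSpace ℝ (Fin n) => ‖ς (p.1 + p.2) - ς p.1‖) ''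
      (Metric.closedBall 0 (r1 + 2*s) ×ˢ Metric.closedBall 0 s)) with hΩςdef
  have hΩςbdd : ∀ s : ℝ, BddAbove ((fun p :
      EuclideanSpace ℝ (Fin n) × EuclideanSpace ℝ (Fin n) => ‖ς (p.1 + p.2) - ς p.1‖) ''
      (Metric.closedBall 0 (r1 + 2*s) ×ˢ Metric.closedBall 0 s)) := fun s =>
    (((isCompact_closedBall _ _).prod (isCompact_closedBall _ _)).image hςcont2).bddAbove
  have hΩςne : ∀ s : ℝ, 0 ≤ s → ((Metric.closedBall (0 : EuclideanSpace ℝ (Fin n)) (r1 + 2*s) ×ˢ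
      Metric.closedBall (0 : EuclideanSpace ℝ (Fin n)) s)).Nonempty := by
    intro s hs
    refine ⟨((0 : EuclideanSpace ℝ (Fin n)), (0 : EuclideanSpace ℝ (Fin n))),
      Set.mem_prod.mpr ⟨?_, ?_⟩⟩
    · rw [mem_closedBall_zero_iff, norm_zero]; linarith [hr1.le]
    · rw [mem_closedBall_zero_iff, norm_zero]; exact hs
  have hΩςle : ∀ s : ℝ, ∀ y : EuclideanSpace ℝ (Fin n), ‖y‖ ≤ r1 + 2*s →
      ∀ d : EuclideanSpace ℝ (Fin n), ‖d‖ ≤ s → ‖ς (y + d) - ς y‖ ≤ Ως s := by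
    intro s y hy d hd
    exact le_csSup (hΩςbdd s) ⟨(y, d),
      ⟨mem_closedBall_zero_iff.mpr hy, mem_closedBall_zero_iff.mpr hd⟩, rfl⟩
  have hΩςnn : ∀ s : ℝ, 0 ≤ s → 0 ≤ Ως s := fun s hs =>
    Real.sSup_nonneg fun x hx => by obtain ⟨p, _, rfl⟩ := hx; exact norm_nonneg _
  have hΩςmono : MonotoneOn Ως (Set.Ici 0) := by
    intro s1 hs1 s2 hs2 h12
    refine csSup_le_csSup (hΩςbdd s2) ((hΩςne s1 hs1).image _) ?_
    exact Set.image_mono (Set.prod_mono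
      (Metric.closedBall_subset_closedBall (by linarith))
      (Metric.closedBall_subset_closedBall h12))
  have hΩς0 : Ως 0 = 0 := by
    refine le_antisymm ?_ (hΩςnn 0 le_rfl)
    refine csSup_le ((hΩςne 0 le_rfl).image _) ?_
    rintro x ⟨⟨y, d⟩, ⟨_, hd⟩, rfl⟩
    rw [mem_closedBall_zero_iff] at hd
    have hd0 : d = 0 := norm_le_zero_iff.mp hd
    simp [hd0]
  have hΩςlim : Tendsto Ως (nhdsWithin 0 (Set.Ici 0)) (nhds 0) := by
    apply tendsto_zero_of_bound hΩςnn
    intro ε hε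
    have hUC := (isCompact_closedBall (0 : EuclideanSpace ℝ (Fin n))
      (r1 + 3)).uniformContinuousOn_of_continuous hς.continuousOn
    rw [Metric.uniformContinuousOn_iff] at hUC
    obtain ⟨δ, hδ, hd⟩ := hUC ε hε
    refine ⟨min δ 1, lt_min hδ one_pos, ?_⟩
    intro s hs0 hsδ
    have hs1 : s ≤ 1 := le_of_lt (lt_of_lt_of_le hsδ (min_le_right _ _))
    have hsδ' : s < δ := lt_of_lt_of_le hsδ (min_le_left _ _)
    refine csSup_le ((hΩςne s hs0).image _) ?_
    rintro x ⟨⟨y, d⟩, ⟨hy, hdb⟩, rfl⟩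
    rw [mem_closedBall_zero_iff] at hy hdb
    have h1 : y + d ∈ Metric.closedBall (0 : EuclideanSpace ℝ (Fin n)) (r1 + 3) :=
      mem_closedBall_zero_iff.mpr (le_trans (norm_add_le _ _) (by linarith))
    have h2 : y ∈ Metric.closedBall (0 : EuclideanSpace ℝ (Fin n)) (r1 + 3) :=
      mem_closedBall_zero_iff.mpr (by linarith)
    have h3 : dist (y + d) y < δ := by
      rw [dist_eq_norm]
      have he : y + d - y = d := by abel
      rw [he]
      exact lt_of_le_of_lt hdb hsδ'
    have h4 := hd _ h1 _ h2 h3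
    rw [dist_eq_norm] at h4
    exact le_of_lt h4
  -- helper: the doubling map
  have h2a : Tendsto (fun a : ℝ => 2 * a) (nhdsWithin 0 (Set.Ici 0))
      (nhdsWithin 0 (Set.Ici 0)) := by
    apply tendsto_nhdsWithin_of_tendsto_nhds_of_eventually_within
    · have := (continuous_const.mul continuous_id : Continuous fun s : ℝ => 2 * s).tendsto 0
      exact ((continuous_mul_left (2:ℝ)).tendsto' 0 0 (by simp)).mono_left nhdsWithin_le_nhds
    · filter_upwards [eventually_mem_nhdsWithin] with s hs
      exact mul_nonneg (by norm_num) (Set.mem_Ici.mp hs)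
  have hΩ2lim : Tendsto (fun a : ℝ => Ως (2 * a)) (nhdsWithin 0 (Set.Ici 0)) (nhds 0) :=
    hΩςlim.comp h2a
  -- the combined monotone bounds
  set P : ℝ → ℝ := fun a => Cς * ω a + ω a * ω a + Ως (2*a) * (gC + ω a) with hPdef
  set Q : ℝ → ℝ := fun b => gC * ως b + (1/2) * (ως b * ως b) + gC * Ως (2*b)
      + (1/2) * (Ως (2*b) * Ως (2*b)) with hQdef
  have hPmono : MonotoneOn P (Set.Ici 0) := by
    intro a ha b hb hab
    have ha' : (0:ℝ) ≤ a := ha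
    have hb' : (0:ℝ) ≤ b := hb
    have h1 : ω a ≤ ω b := hωmono ha hb hab
    have h2 : Ως (2*a) ≤ Ως (2*b) :=
      hΩςmono (by simpa using mul_nonneg (by norm_num : (0:ℝ) ≤ 2) ha')
        (by simpa using mul_nonneg (by norm_num : (0:ℝ) ≤ 2) hb') (by linarith)
    have h3 : 0 ≤ ω a := hωnn a ha'
    have h4 : 0 ≤ ω b := hωnn b hb'
    have h5 : 0 ≤ Ως (2*a) := hΩςnn _ (by linarith)
    have h6 : 0 ≤ Ως (2*b) := hΩςnn _ (by linarith)
    have e1 : Cς * ω a ≤ Cς * ω b := mul_le_mul_of_nonneg_left h1 hCς0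
    have e2 : ω a * ω a ≤ ω b * ω b := mul_le_mul h1 h1 h3 h4
    have e3 : Ως (2*a) * (gC + ω a) ≤ Ως (2*b) * (gC + ω b) :=
      mul_le_mul h2 (by linarith) (by linarith) h6
    show Cς * ω a + ω a * ω a + Ως (2*a) * (gC + ω a) ≤
      Cς * ω b + ω b * ω b + Ως (2*b) * (gC + ω b)
    linarith
  have hQmono : MonotoneOn Q (Set.Ici 0) := by
    intro a ha b hb hab
    have ha' : (0:ℝ) ≤ a := ha
    have hb' : (0:ℝ) ≤ b := hb
    have h1 : ως a ≤ ως b := hωςmono ha hb hab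
    have h2 : Ως (2*a) ≤ Ως (2*b) :=
      hΩςmono (by simpa using mul_nonneg (by norm_num : (0:ℝ) ≤ 2) ha')
        (by simpa using mul_nonneg (by norm_num : (0:ℝ) ≤ 2) hb') (by linarith)
    have h3 : 0 ≤ ως a := hωςnn a ha'
    have h4 : 0 ≤ ως b := hωςnn b hb'
    have h5 : 0 ≤ Ως (2*a) := hΩςnn _ (by linarith)
    have h6 : 0 ≤ Ως (2*b) := hΩςnn _ (by linarith)
    have e1 : gC * ως a ≤ gC * ως b := mul_le_mul_of_nonneg_left h1 hgC0
    have e2 : ως a * ως a ≤ ως b * ως b := mul_le_mul h1 h1 h3 h4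
    have e3 : gC * Ως (2*a) ≤ gC * Ως (2*b) := mul_le_mul_of_nonneg_left h2 hgC0
    have e4 : Ως (2*a) * Ως (2*a) ≤ Ως (2*b) * Ως (2*b) := mul_le_mul h2 h2 h5 h6
    show gC * ως a + (1/2) * (ως a * ως a) + gC * Ως (2*a) + (1/2) * (Ως (2*a) * Ως (2*a)) ≤
      gC * ως b + (1/2) * (ως b * ως b) + gC * Ως (2*b) + (1/2) * (Ως (2*b) * Ως (2*b))
    linarith
  have hP0 : P 0 = 0 := by
    show Cς * ω 0 + ω 0 * ω 0 + Ως (2*0) * (gC + ω 0) = 0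
    rw [hω0, show (2:ℝ)*0 = 0 by ring, hΩς0]; ring
  have hQ0 : Q 0 = 0 := by
    show gC * ως 0 + (1/2) * (ως 0 * ως 0) + gC * Ως (2*0) + (1/2) * (Ως (2*0) * Ως (2*0)) = 0
    rw [hως0, show (2:ℝ)*0 = 0 by ring, hΩς0]; ring
  have hPlim : Tendsto P (nhdsWithin 0 (Set.Ici 0)) (nhds 0) := by
    have t1 := hωlim.const_mul Cς
    have t2 := hωlim.mul hωlim
    have t3 := hΩ2lim.mul (hωlim.const_add gC)
    have hsum := (t1.add t2).add t3
    have hv : Cς * 0 + 0 * 0 + 0 * (gC + 0) = (0:ℝ) := by ring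
    rw [hv] at hsum
    exact hsum
  have hQlim : Tendsto Q (nhdsWithin 0 (Set.Ici 0)) (nhds 0) := by
    have t1 := hωςlim.const_mul gC
    have t2 := (hωςlim.mul hωςlim).const_mul ((1:ℝ)/2)
    have t3 := hΩ2lim.const_mul gC
    have t4 := (hΩ2lim.mul hΩ2lim).const_mul ((1:ℝ)/2)
    have hsum := ((t1.add t2).add t3).add t4
    have hv : gC * 0 + (1:ℝ)/2 * (0 * 0) + gC * 0 + (1:ℝ)/2 * (0 * 0) = (0:ℝ) := by ring
    rw [hv] at hsum
    exact hsum
  -- class K majorants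
  obtain ⟨ϱ1, hϱ1K, hϱ1maj⟩ := exists_classK_majorant hωmono hω0 hωlim
  obtain ⟨ϱ2, hϱ2K, hϱ2maj⟩ := exists_classK_majorant hPmono hP0 hPlim
  obtain ⟨ϱ3, hϱ3K, hϱ3maj⟩ := exists_classK_majorant hQmono hQ0 hQlim
  refine ⟨ϱ1, ϱ2, ϱ3, gC, hϱ1K, hϱ2K, hϱ3K, hgC0, ?_⟩
  intro θ hθ θt e εe xr hxr
  set a := satv ls εs (θ + θt) with hadef
  have hsθ : satv ls εs θ = θ := hsatθ θ hθ
  have hbd : ‖a - θ‖ ≤ γs ‖θt‖ := hγs_sat θt θ hθ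
  have hγnn : 0 ≤ γs ‖θt‖ := by
    rw [← hγ0]
    exact hγmono (le_refl (0:ℝ)) (norm_nonneg θt) (norm_nonneg θt)
  have haK : a ∈ K := hsatK _
  have hθK' : θ ∈ K := hθK θ hθ
  have hωe_nn : 0 ≤ ω ‖e‖ := hωnn _ (norm_nonneg e)
  -- mean value bounds
  have hDbound : ∀ ϑ ∈ K, ‖Dφ ϑ (e + xr)‖ ≤ gC + ω ‖e‖ := by
    intro ϑ hϑ
    have h1 : ‖Dφ ϑ xr‖ ≤ gC := hgCle ϑ hϑ xr hxr
    have h2 : ‖Dφ ϑ (xr + e) - Dφ ϑ xr‖ ≤ ω ‖e‖ := hωle ‖e‖ ϑ hϑ xr hxr e le_rfl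
    calc ‖Dφ ϑ (e + xr)‖ = ‖Dφ ϑ xr + (Dφ ϑ (xr + e) - Dφ ϑ xr)‖ := by
          rw [add_comm e xr]; congr 1; abel
      _ ≤ ‖Dφ ϑ xr‖ + ‖Dφ ϑ (xr + e) - Dφ ϑ xr‖ := norm_add_le _ _
      _ ≤ gC + ω ‖e‖ := add_le_add h1 h2
  have hψx : ‖φ a (e + xr) - φ θ (e + xr)‖ ≤ (gC + ω ‖e‖) * ‖a - θ‖ :=
    Convex.norm_image_sub_le_of_norm_hasFDerivWithin_le
      (fun ϑ hϑ => (hφ ϑ (e + xr)).hasFDerivWithinAt) hDbound hKconv hθK' haK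
  have hψr : ‖φ a xr - φ θ xr‖ ≤ gC * ‖a - θ‖ :=
    Convex.norm_image_sub_le_of_norm_hasFDerivWithin_le
      (fun ϑ hϑ => (hφ ϑ xr).hasFDerivWithinAt)
      (fun ϑ hϑ => hgCle ϑ hϑ xr hxr) hKconv hθK' haK
  have hψdiff : ‖(φ a xr - φ a (e + xr)) - (φ θ xr - φ θ (e + xr))‖ ≤ ω ‖e‖ * ‖a - θ‖ := by
    refine Convex.norm_image_sub_le_of_norm_hasFDerivWithin_le
      (f := fun ϑ => φ ϑ xr - φ ϑ (e + xr)) (f' := fun ϑ => Dφ ϑ xr - Dφ ϑ (e + xr))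
      (fun ϑ hϑ => ((hφ ϑ xr).sub (hφ ϑ (e + xr))).hasFDerivWithinAt) ?_ hKconv hθK' haK
    intro ϑ hϑ
    have h2 : ‖Dφ ϑ (xr + e) - Dφ ϑ xr‖ ≤ ω ‖e‖ := hωle ‖e‖ ϑ hϑ xr hxr e le_rfl
    calc ‖Dφ ϑ xr - Dφ ϑ (e + xr)‖ = ‖Dφ ϑ (xr + e) - Dφ ϑ xr‖ := by
          rw [add_comm e xr, norm_sub_rev]
      _ ≤ ω ‖e‖ := h2
  -- rewrite tphis
  have htpx : tphis ls εs φ θ θt (e + xr) = φ a (e + xr) - φ θ (e + xr) := by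
    rw [tphis, hsθ, ← hadef]
  have htpr : tphis ls εs φ θ θt xr = φ a xr - φ θ xr := by
    rw [tphis, hsθ, ← hadef]
  constructor
  · -- part (i)
    rw [htpx]
    have h1 := hϱ1maj ‖e‖ (norm_nonneg e)
    calc ‖φ a (e + xr) - φ θ (e + xr)‖ ≤ (gC + ω ‖e‖) * ‖a - θ‖ := hψx
      _ ≤ (gC + ω ‖e‖) * γs ‖θt‖ := mul_le_mul_of_nonneg_left hbd (by linarith)
      _ ≤ (ϱ1 ‖e‖ + gC) * γs ‖θt‖ := mul_le_mul_of_nonneg_right (by linarith) hγnn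
  · -- part (ii)
    rw [htpx, htpr]
    set ψr := φ a xr - φ θ xr with hψrdef
    set ψx := φ a (e + xr) - φ θ (e + xr) with hψxdef
    have hψr_norm : ‖ψr‖ ≤ gC * γs ‖θt‖ :=
      le_trans hψr (mul_le_mul_of_nonneg_left hbd hgC0)
    have hψx_norm : ‖ψx‖ ≤ (gC + ω ‖e‖) * γs ‖θt‖ :=
      le_trans hψx (mul_le_mul_of_nonneg_left hbd (by linarith))
    have hψd_norm : ‖ψr - ψx‖ ≤ ω ‖e‖ * γs ‖θt‖ := by
      have heq : ψr - ψx = (φ a xr - φ a (e + xr)) - (φ θ xr - φ θ (e + xr)) := by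
        rw [hψrdef, hψxdef]; abel
      rw [heq]
      exact le_trans hψdiff (mul_le_mul_of_nonneg_left hbd hωe_nn)
    -- ς bounds
    have hc1 : ‖ς xr - ς (xr - εe)‖ ≤ ως ‖εe‖ := by
      rw [norm_sub_rev]
      refine le_csSup (hωςbdd ‖εe‖) ⟨(xr, -εe),
        ⟨mem_closedBall_zero_iff.mpr hxr, mem_closedBall_zero_iff.mpr (by simp)⟩, ?_⟩
      show ‖ς (xr + -εe) - ς xr‖ = ‖ς (xr - εe) - ς xr‖
      rw [show xr + -εe = xr - εe from (sub_eq_add_neg xr εe).symm]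
    have hCςxr : ‖ς xr‖ ≤ Cς := hCςle xr hxr
    have hc2 : ‖ς (xr - εe)‖ ≤ Cς + ως ‖εe‖ := by
      calc ‖ς (xr - εe)‖ = ‖ς xr + (ς (xr - εe) - ς xr)‖ := by congr 1; abel
        _ ≤ ‖ς xr‖ + ‖ς (xr - εe) - ς xr‖ := norm_add_le _ _
        _ ≤ Cς + ως ‖εe‖ := add_le_add hCςxr (by rw [norm_sub_rev]; exact hc1)
    have hc3 : ‖ς (xr - εe) - ς (e + xr - εe)‖ ≤ Ως (‖e‖ + ‖εe‖) := by
      have heq : e + xr - εe = (xr - εe) + e := by abel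
      rw [norm_sub_rev, heq]
      refine hΩςle (‖e‖ + ‖εe‖) (xr - εe) ?_ e (by linarith [norm_nonneg εe])
      have h0 := norm_sub_le xr εe
      have h1 := norm_nonneg e
      have h2 := norm_nonneg εe
      linarith
    have hc4 : Ως (‖e‖ + ‖εe‖) ≤ Ως (2*‖e‖) + Ως (2*‖εe‖) := by
      have he := norm_nonneg e
      have hee := norm_nonneg εe
      rcases le_total ‖e‖ ‖εe‖ with h | h
      · have h5 : Ως (‖e‖ + ‖εe‖) ≤ Ως (2*‖εe‖) :=
          hΩςmono (by simp only [Set.mem_Ici]; positivity)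
            (by simp only [Set.mem_Ici]; positivity) (by linarith)
        linarith [hΩςnn (2*‖e‖) (by linarith)]
      · have h5 : Ως (‖e‖ + ‖εe‖) ≤ Ως (2*‖e‖) :=
          hΩςmono (by simp only [Set.mem_Ici]; positivity)
            (by simp only [Set.mem_Ici]; positivity) (by linarith)
        linarith [hΩςnn (2*‖εe‖) (by linarith)]
    -- decomposition
    have key : ς xr ψr - ς (e + xr - εe) ψx =
        (ς xr - ς (xr - εe)) ψr + (ς (xr - εe)) (ψr - ψx)
          + (ς (xr - εe) - ς (e + xr - εe)) ψx := by
      simp only [ContinuousLinearMap.sub_apply, map_sub]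
      abel
    have hωςe_nn : 0 ≤ ως ‖εe‖ := hωςnn _ (norm_nonneg εe)
    have hΩa_nn : 0 ≤ Ως (2*‖e‖) := hΩςnn _ (by linarith [norm_nonneg e])
    have hΩb_nn : 0 ≤ Ως (2*‖εe‖) := hΩςnn _ (by linarith [norm_nonneg εe])
    have t1 : ‖(ς xr - ς (xr - εe)) ψr‖ ≤ ως ‖εe‖ * (gC * γs ‖θt‖) :=
      le_trans (ContinuousLinearMap.le_opNorm _ _)
        (mul_le_mul hc1 hψr_norm (norm_nonneg _) hωςe_nn)
    have t2 : ‖(ς (xr - εe)) (ψr - ψx)‖ ≤ (Cς + ως ‖εe‖) * (ω ‖e‖ * γs ‖θt‖) :=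
      le_trans (ContinuousLinearMap.le_opNorm _ _)
        (mul_le_mul hc2 hψd_norm (norm_nonneg _) (by linarith))
    have t3 : ‖(ς (xr - εe) - ς (e + xr - εe)) ψx‖ ≤
        (Ως (2*‖e‖) + Ως (2*‖εe‖)) * ((gC + ω ‖e‖) * γs ‖θt‖) :=
      le_trans (ContinuousLinearMap.le_opNorm _ _)
        (mul_le_mul (le_trans hc3 hc4) hψx_norm (norm_nonneg _) (by linarith))
    have hcoef : ως ‖εe‖ * gC + (Cς + ως ‖εe‖) * ω ‖e‖
        + (Ως (2*‖e‖) + Ως (2*‖εe‖)) * (gC + ω ‖e‖) ≤ P ‖e‖ + Q ‖εe‖ := by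
      show ως ‖εe‖ * gC + (Cς + ως ‖εe‖) * ω ‖e‖
        + (Ως (2*‖e‖) + Ως (2*‖εe‖)) * (gC + ω ‖e‖) ≤
        (Cς * ω ‖e‖ + ω ‖e‖ * ω ‖e‖ + Ως (2*‖e‖) * (gC + ω ‖e‖)) +
        (gC * ως ‖εe‖ + (1/2) * (ως ‖εe‖ * ως ‖εe‖) + gC * Ως (2*‖εe‖)
          + (1/2) * (Ως (2*‖εe‖) * Ως (2*‖εe‖)))
      nlinarith [sq_nonneg (ω ‖e‖ - ως ‖εe‖), sq_nonneg (ω ‖e‖ - Ως (2*‖εe‖))]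
    calc ‖ς xr ψr - ς (e + xr - εe) ψx‖
        = ‖(ς xr - ς (xr - εe)) ψr + (ς (xr - εe)) (ψr - ψx)
          + (ς (xr - εe) - ς (e + xr - εe)) ψx‖ := by rw [key]
      _ ≤ ‖(ς xr - ς (xr - εe)) ψr‖ + ‖(ς (xr - εe)) (ψr - ψx)‖
          + ‖(ς (xr - εe) - ς (e + xr - εe)) ψx‖ := norm_add₃_le
      _ ≤ ως ‖εe‖ * (gC * γs ‖θt‖) + (Cς + ως ‖εe‖) * (ω ‖e‖ * γs ‖θt‖)
          + (Ως (2*‖e‖) + Ως (2*‖εe‖)) * ((gC + ω ‖e‖) * γs ‖θt‖) := by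
            exact add_le_add (add_le_add t1 t2) t3
      _ = (ως ‖εe‖ * gC + (Cς + ως ‖εe‖) * ω ‖e‖
          + (Ως (2*‖e‖) + Ως (2*‖εe‖)) * (gC + ω ‖e‖)) * γs ‖θt‖ := by ring
      _ ≤ (P ‖e‖ + Q ‖εe‖) * γs ‖θt‖ := mul_le_mul_of_nonneg_right hcoef hγnn
      _ ≤ (ϱ2 ‖e‖ + ϱ3 ‖εe‖) * γs ‖θt‖ := mul_le_mul_of_nonneg_right
          (add_le_add (hϱ2maj ‖e‖ (norm_nonneg e)) (hϱ3maj ‖εe‖ (norm_nonneg εe))) hγnn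
end
end

section
/- Let a1 > 0, let γ_s be a class K function satisfying γ_s(s) ≤ s and γ_s(s) ≤ l_γ for all s ≥ 0 (for some constant l_γ > 0), and let γ: [0,∞) → [0,∞) satisfy γ(s) ≤ ḡ(s)·s for all s ≥ 0, for some continuous nondecreasing ḡ: [0,∞) → [0,∞). Then there exists a constant g > 0 such that γ_s(√(γ(s)/a1))² ≤ g²·s for all s ≥ 0. -/
open Real Set Filter
open scoped RealInnerProductSpace

noncomputable section

/-- auxiliary growth estimate converting O(s) small-argument behavior
into a global linear bound after composition with γ_s. -/
theorem statement19 (a1 lγ : ℝ) (ha1 : 0 < a1) (hlγ : 0 < lγ)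
    (γs : ℝ → ℝ) (hγs : IsClassK γs)
    (hγs_le : ∀ s ≥ (0:ℝ), γs s ≤ s ∧ γs s ≤ lγ)
    (γ gbar : ℝ → ℝ) (hgbar_c : ContinuousOn gbar (Set.Ici 0))
    (hgbar_m : MonotoneOn gbar (Set.Ici 0)) (hgbar_nn : ∀ s ≥ (0:ℝ), 0 ≤ gbar s)
    (hγ : ∀ s ≥ (0:ℝ), 0 ≤ γ s ∧ γ s ≤ gbar s * s) :
    ∃ g : ℝ, 0 < g ∧ ∀ s ≥ (0:ℝ), γs (Real.sqrt (γ s / a1)) ^ 2 ≤ g ^ 2 * s := by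
  obtain ⟨hc, hm, h0⟩ := hγs
  have hg1 : 0 ≤ gbar 1 := hgbar_nn 1 one_pos.le
  have hdiv : 0 ≤ gbar 1 / a1 := div_nonneg hg1 ha1.le
  have hM1 : (0:ℝ) < gbar 1 / a1 + lγ ^ 2 + 1 := by nlinarith [sq_nonneg lγ]
  refine ⟨Real.sqrt (gbar 1 / a1 + lγ ^ 2 + 1), Real.sqrt_pos.mpr hM1, ?_⟩
  intro s hs
  have hsqM : Real.sqrt (gbar 1 / a1 + lγ ^ 2 + 1) ^ 2 = gbar 1 / a1 + lγ ^ 2 + 1 :=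
    Real.sq_sqrt hM1.le
  set x := Real.sqrt (γ s / a1) with hx
  have hxnn : 0 ≤ x := Real.sqrt_nonneg _
  have hγsnn : 0 ≤ γ s := (hγ s hs).1
  have hγsx_nn : 0 ≤ γs x := by
    have := hm.monotoneOn (Set.mem_Ici.mpr le_rfl) (Set.mem_Ici.mpr hxnn) hxnn
    linarith [h0 ▸ this]
  rw [hsqM]
  rcases le_or_gt s 1 with h1 | h1
  · have hxle : γs x ≤ x := (hγs_le x hxnn).1
    have hx2 : x ^ 2 = γ s / a1 := Real.sq_sqrt (by positivity)
    have hgb : gbar s ≤ gbar 1 := hgbar_m (Set.mem_Ici.mpr hs) (Set.mem_Ici.mpr one_pos.le) h1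
    have hγle : γ s ≤ gbar s * s := (hγ s hs).2
    have hsq : γs x ^ 2 ≤ x ^ 2 := by nlinarith
    have hprod : gbar s * s ≤ gbar 1 * s := mul_le_mul_of_nonneg_right hgb hs
    have hbound : γ s / a1 ≤ (gbar 1 / a1) * s := by
      rw [div_le_iff₀ ha1, mul_comm (gbar 1 / a1) s, mul_assoc,
        div_mul_cancel₀ _ ha1.ne', mul_comm s (gbar 1)]
      linarith
    have hMs : (gbar 1 / a1) * s ≤ (gbar 1 / a1 + lγ ^ 2 + 1) * s :=
      mul_le_mul_of_nonneg_right (by nlinarith [sq_nonneg lγ]) hs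
    calc γs x ^ 2 ≤ x ^ 2 := hsq
      _ = γ s / a1 := hx2
      _ ≤ (gbar 1 / a1) * s := hbound
      _ ≤ (gbar 1 / a1 + lγ ^ 2 + 1) * s := hMs
  · have hxle : γs x ≤ lγ := (hγs_le x hxnn).2
    have hsq : γs x ^ 2 ≤ lγ ^ 2 := by nlinarith
    nlinarith [mul_nonneg (sq_nonneg lγ) (by linarith : (0:ℝ) ≤ s - 1),
      mul_nonneg hdiv hs, sq_nonneg lγ]
end
end
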